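/- Let s(n) denote the number of strictly decreasing partitions (λ₁ > λ₂ > λ₃ > ⋯) of positive integers such that λ₁ + λ₃ + λ₅ + ⋯ = n. Then s(n) equals p(n), the number of all (unrestricted) partitions of n, for every n ≥ 1. -/

import Mathlib

/-- `l` is a partition: a weakly decreasing list of positive integers. -/
def IsPartition (l : List ℕ) : Prop :=
  l.Pairwise (· ≥ ·) ∧ ∀ x ∈ l, 0 < x

/-- `l` is a strict partition: a strictly decreasing list of positive integers. -/
def IsStrict (l : List ℕ) : Prop :=
  l.Pairwise (· > ·) ∧ ∀ x ∈ l, 0 < x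

/-- Sum of the parts of `l` in positions `1, k+1, 2k+1, …` (0-indexed `0, k, 2k, …`). -/
def schmidtSum (k : ℕ) (l : List ℕ) : ℕ :=
  ∑ i ∈ Finset.range l.length, if i % k = 0 then l.getD i 0 else 0

section SchmidtAux
open Finset

def oddSum (l : List ℕ) : ℕ :=
  ∑ i ∈ Finset.range l.length, if i % 2 = 1 then l.getD i 0 else 0

lemma schmidtSum_nil : schmidtSum 2 [] = 0 := by simp [schmidtSum]
lemma oddSum_nil : oddSum [] = 0 := by simp [oddSum]

lemma schmidtSum_cons (x : ℕ) (t : List ℕ) : schmidtSum 2 (x :: t) = x + oddSum t := by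
  unfold schmidtSum oddSum
  rw [List.length_cons, Finset.sum_range_succ']
  simp only [List.getD_cons_succ, List.getD_cons_zero]
  rw [add_comm]
  congr 1
  apply Finset.sum_congr rfl
  intro i _
  have : (i + 1) % 2 = 0 ↔ i % 2 = 1 := by omega
  by_cases h : i % 2 = 1 <;> simp [h, this] <;> omega

lemma oddSum_cons (x : ℕ) (t : List ℕ) : oddSum (x :: t) = schmidtSum 2 t := by
  unfold schmidtSum oddSum
  rw [List.length_cons, Finset.sum_range_succ']
  simp only [List.getD_cons_succ, List.getD_cons_zero]
  have : (∀ i, ((i + 1) % 2 = 1 ↔ i % 2 = 0)) := by omega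
  simp only [this]
  simp

mutual
def TS : ℕ → ℕ → Finset (List ℕ)
  | 0, n => if n = 0 then {[]} else ∅
  | (b+1), n =>
      TS b n ∪ (if b+1 ≤ n then (US b (n - (b+1))).image (List.cons (b+1)) else ∅)
def US : ℕ → ℕ → Finset (List ℕ)
  | 0, n => if n = 0 then {[]} else ∅
  | (b+1), n => US b n ∪ (TS b n).image (List.cons (b+1))
end

lemma sorted_cons_of_lt {x : ℕ} {t : List ℕ} (ht : t.Pairwise (· > ·))
    (h : ∀ y ∈ t, y < x) : (x :: t).Pairwise (· > ·) :=
  List.pairwise_cons.2 ⟨h, ht⟩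

lemma mem_TS_US (b : ℕ) : ∀ n l,
    (l ∈ TS b n ↔ IsStrict l ∧ (∀ x ∈ l, x ≤ b) ∧ schmidtSum 2 l = n) ∧
    (l ∈ US b n ↔ IsStrict l ∧ (∀ x ∈ l, x ≤ b) ∧ oddSum l = n) := by
  induction b with
  | zero =>
    intro n l
    constructor
    · constructor
      · intro h
        simp only [TS] at h
        split at h
        · simp at h
          subst h
          simp_all [IsStrict, schmidtSum_nil]
        · simp at h
      · rintro ⟨hs, hb, he⟩
        have hl : l = [] := by
          cases l with
          | nil => rfl
          | cons x t =>
            exfalso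
            have := hs.2 x (by simp)
            have := hb x (by simp)
            omega
        subst hl
        rw [schmidtSum_nil] at he
        simp [TS, ← he]
    · constructor
      · intro h
        simp only [US] at h
        split at h
        · simp at h
          subst h
          simp_all [IsStrict, oddSum_nil]
        · simp at h
      · rintro ⟨hs, hb, he⟩
        have hl : l = [] := by
          cases l with
          | nil => rfl
          | cons x t =>
            exfalso
            have := hs.2 x (by simp)
            have := hb x (by simp)
            omega
        subst hl
        rw [oddSum_nil] at he
        simp [US, ← he]
  | succ b ih =>
    intro n l
    constructor
    · constructor
      · intro h
        simp only [TS, Finset.mem_union] at h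
        rcases h with h | h
        · obtain ⟨hs, hb, he⟩ := ((ih n l).1).1 h
          exact ⟨hs, fun x hx => le_trans (hb x hx) (by omega), he⟩
        · split at h
          case isTrue hbn =>
            simp only [Finset.mem_image] at h
            obtain ⟨t, ht, rfl⟩ := h
            obtain ⟨hs, hb2, he⟩ := ((ih (n - (b+1)) t).2).1 ht
            refine ⟨⟨sorted_cons_of_lt hs.1 (fun y hy => by have := hb2 y hy; omega),
              ?_⟩, ?_, ?_⟩
            · intro x hx
              rcases List.mem_cons.1 hx with rfl | hx
              · omega
              · exact hs.2 x hx
            · intro x hx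
              rcases List.mem_cons.1 hx with rfl | hx
              · omega
              · exact le_trans (hb2 x hx) (by omega)
            · rw [schmidtSum_cons, he]
              omega
          case isFalse => simp at h
      · rintro ⟨hs, hb, he⟩
        simp only [TS, Finset.mem_union]
        cases l with
        | nil =>
          left
          rw [schmidtSum_nil] at he
          exact ((ih n []).1).2 ⟨hs, by simp, by rw [schmidtSum_nil, ← he]⟩
        | cons x t =>
          have hxt : ∀ y ∈ t, y < x := fun y hy => List.rel_of_pairwise_cons hs.1 hy
          by_cases hx : x ≤ b
          · left
            refine ((ih n (x :: t)).1).2 ⟨hs, ?_, he⟩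
            intro y hy
            rcases List.mem_cons.1 hy with rfl | hy
            · exact hx
            · have := hxt y hy; omega
          · have hxe : x = b + 1 := by have := hb x (by simp); omega
            right
            rw [schmidtSum_cons] at he
            have hle : b + 1 ≤ n := by omega
            rw [if_pos hle]
            subst hxe
            simp only [Finset.mem_image]
            refine ⟨t, ((ih (n - (b+1)) t).2).2 ⟨⟨hs.1.of_cons, fun y hy => hs.2 y (by simp [hy])⟩, fun y hy => by have := hxt y hy; omega, by omega⟩, rfl⟩
    · constructor
      · intro h
        simp only [US, Finset.mem_union] at h
        rcases h with h | h
        · obtain ⟨hs, hb, he⟩ := ((ih n l).2).1 h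
          exact ⟨hs, fun x hx => le_trans (hb x hx) (by omega), he⟩
        · simp only [Finset.mem_image] at h
          obtain ⟨t, ht, rfl⟩ := h
          obtain ⟨hs, hb2, he⟩ := ((ih n t).1).1 ht
          refine ⟨⟨sorted_cons_of_lt hs.1 (fun y hy => by have := hb2 y hy; omega), ?_⟩, ?_, ?_⟩
          · intro x hx
            rcases List.mem_cons.1 hx with rfl | hx
            · omega
            · exact hs.2 x hx
          · intro x hx
            rcases List.mem_cons.1 hx with rfl | hx
            · omega
            · exact le_trans (hb2 x hx) (by omega)
          · rw [oddSum_cons, he]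
      · rintro ⟨hs, hb, he⟩
        simp only [US, Finset.mem_union]
        cases l with
        | nil =>
          left
          rw [oddSum_nil] at he
          exact ((ih n []).2).2 ⟨hs, by simp, by rw [oddSum_nil, ← he]⟩
        | cons x t =>
          have hxt : ∀ y ∈ t, y < x := fun y hy => List.rel_of_pairwise_cons hs.1 hy
          by_cases hx : x ≤ b
          · left
            refine ((ih n (x :: t)).2).2 ⟨hs, ?_, he⟩
            intro y hy
            rcases List.mem_cons.1 hy with rfl | hy
            · exact hx
            · have := hxt y hy; omega
          · have hxe : x = b + 1 := by have := hb x (by simp); omega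
            right
            rw [oddSum_cons] at he
            subst hxe
            simp only [Finset.mem_image]
            refine ⟨t, ((ih n t).1).2 ⟨⟨hs.1.of_cons, fun y hy => hs.2 y (by simp [hy])⟩, fun y hy => by have := hxt y hy; omega, he⟩, rfl⟩

lemma disj_aux {b : ℕ} (S X : Finset (List ℕ))
    (hS : ∀ l ∈ S, ∀ x ∈ l, x ≤ b) :
    Disjoint S (X.image (List.cons (b+1))) := by
  rw [Finset.disjoint_right]
  rintro l hl hl2
  simp only [Finset.mem_image] at hl
  obtain ⟨t, _, rfl⟩ := hl
  have := hS _ hl2 (b+1) (by simp)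
  omega

lemma card_TS_succ (b n : ℕ) : (TS (b+1) n).card
    = (TS b n).card + (if b+1 ≤ n then (US b (n-(b+1))).card else 0) := by
  show (TS b n ∪ _).card = _
  split
  case isTrue h =>
    rw [Finset.card_union_of_disjoint, Finset.card_image_of_injective _ (List.cons_injective)]
    exact disj_aux _ _ (fun l hl => (((mem_TS_US b n l).1).1 hl).2.1)
  case isFalse h =>
    rw [Finset.union_empty]
    omega

lemma card_US_succ (b n : ℕ) : (US (b+1) n).card = (US b n).card + (TS b n).card := by
  show (US b n ∪ (TS b n).image (List.cons (b+1))).card = _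
  rw [Finset.card_union_of_disjoint, Finset.card_image_of_injective _ (List.cons_injective)]
  exact disj_aux _ _ (fun l hl => (((mem_TS_US b n l).2).1 hl).2.1)

lemma head_bound {x : ℕ} {t : List ℕ} (hs : IsStrict (x :: t)) :
    ∀ y ∈ x :: t, y ≤ x := by
  intro y hy
  rcases List.mem_cons.1 hy with rfl | hy
  · exact le_refl _
  · exact le_of_lt (List.rel_of_pairwise_cons hs.1 hy)

lemma mem_TS_self (n : ℕ) (l : List ℕ) :
    l ∈ TS n n ↔ IsStrict l ∧ schmidtSum 2 l = n := by
  rw [((mem_TS_US n n l).1)]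
  constructor
  · rintro ⟨a, _, c⟩; exact ⟨a, c⟩
  · rintro ⟨hs, he⟩
    refine ⟨hs, ?_, he⟩
    cases l with
    | nil => simp
    | cons x t =>
      intro y hy
      have h1 := head_bound hs y hy
      have h2 : x ≤ schmidtSum 2 (x :: t) := by rw [schmidtSum_cons]; omega
      omega

lemma natCard_eq (n : ℕ) :
    Nat.card {l : List ℕ // IsStrict l ∧ schmidtSum 2 l = n} = (TS n n).card := by
  rw [Nat.card_congr (Equiv.subtypeEquivRight (fun l => (mem_TS_self n l).symm))]
  rw [Nat.card_eq_fintype_card, Fintype.card_coe]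

def Pms (n : ℕ) : Finset (Multiset ℕ) :=
  Finset.univ.image (fun μ : Nat.Partition n => μ.parts)

lemma mem_Pms (n : ℕ) (M : Multiset ℕ) :
    M ∈ Pms n ↔ (∀ x ∈ M, 0 < x) ∧ M.sum = n := by
  simp only [Pms, Finset.mem_image, Finset.mem_univ, true_and]
  constructor
  · rintro ⟨μ, rfl⟩; exact ⟨fun x hx => μ.parts_pos hx, μ.parts_sum⟩
  · rintro ⟨h1, h2⟩; exact ⟨⟨M, fun {x} hx => h1 x hx, h2⟩, rfl⟩

lemma card_Pms (n : ℕ) : (Pms n).card = Fintype.card (Nat.Partition n) := by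
  rw [← Finset.card_univ]
  apply Finset.card_image_of_injective
  intro a b h
  cases a; cases b; simpa using h

def HSet (b n : ℕ) : Finset (Multiset ℕ) :=
  (Pms n).filter (fun M => ∀ x ∈ M, x + Multiset.card M ≤ b + 1)

def BSet (a l m : ℕ) : Finset (Multiset ℕ) :=
  (Pms m).filter (fun M => (∀ x ∈ M, x ≤ a) ∧ Multiset.card M ≤ l)

lemma card_le_sum_of_pos {M : Multiset ℕ} (h : ∀ x ∈ M, 0 < x) :
    Multiset.card M ≤ M.sum := by
  induction M using Multiset.induction with
  | empty => simp
  | cons a s ih =>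
    simp only [Multiset.card_cons, Multiset.sum_cons]
    have ha := h a (by simp)
    have := ih (fun x hx => h x (by simp [hx]))
    omega

lemma sum_map_succ (M : Multiset ℕ) :
    ((M.map (· + 1)).sum = M.sum + Multiset.card M) := by
  induction M using Multiset.induction with
  | empty => simp
  | cons a s ih => simp [ih]; ring

lemma sum_map_pred {M : Multiset ℕ} (h : ∀ x ∈ M, 0 < x) :
    (M.map (· - 1)).sum + Multiset.card M = M.sum := by
  induction M using Multiset.induction with
  | empty => simp
  | cons a s ih =>
    have ha := h a (by simp)
    have := ih (fun x hx => h x (by simp [hx]))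
    simp only [Multiset.map_cons, Multiset.sum_cons, Multiset.card_cons]
    omega

lemma filter_not_one {M : Multiset ℕ} (h : ∀ x ∈ M, 0 < x) :
    M.filter (fun x => ¬ 1 < x) = Multiset.replicate (M.count 1) 1 := by
  rw [show (Multiset.replicate (M.count 1) 1) = M.filter (fun x => 1 = x) from (Multiset.filter_eq M 1).symm]
  apply Multiset.filter_congr
  intro x hx
  have := h x hx
  constructor <;> intro <;> omega

lemma map_pred_succ {M : Multiset ℕ} (h : ∀ x ∈ M, 0 < x) :
    (M.map (· - 1)).map (· + 1) = M := by
  rw [Multiset.map_map]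
  rw [show M = M.map id from (Multiset.map_id M).symm]
  apply Multiset.map_congr
  · simp
  · intro x hx
    have := h x (by simpa using hx)
    simp; omega

lemma Pms_zero : Pms 0 = {0} := by
  ext M
  rw [mem_Pms]
  simp only [Finset.mem_singleton]
  constructor
  · rintro ⟨h1, h2⟩
    rcases Multiset.empty_or_exists_mem M with rfl | ⟨x, hx⟩
    · rfl
    · have := Multiset.single_le_sum (fun y (_ : y ∈ M) => Nat.zero_le y) x hx
      have := h1 x hx
      omega
  · rintro rfl; simp

lemma card_HSet_zero (n : ℕ) : (HSet 0 n).card = if n = 0 then 1 else 0 := by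
  split
  case isTrue h =>
    subst h
    rw [show HSet 0 0 = {0} from ?_]
    · rfl
    · unfold HSet
      rw [Pms_zero]
      apply Finset.filter_true_of_mem
      intro M hM
      rw [Finset.mem_singleton] at hM
      subst hM
      intro x hx
      simp at hx
  case isFalse h =>
    rw [Finset.card_eq_zero]
    ext M
    simp only [HSet, Finset.mem_filter, mem_Pms, Finset.notMem_empty, iff_false]
    rintro ⟨⟨h1, h2⟩, h3⟩
    rcases Multiset.empty_or_exists_mem M with rfl | ⟨x, hx⟩
    · simp at h2; omega
    · have := h1 x hx
      have := h3 x hx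
      have : (1 : ℕ) ≤ Multiset.card M := by
        rw [Nat.one_le_iff_ne_zero, Ne, Multiset.card_eq_zero]
        rintro rfl; simp at hx
      omega

lemma card_BSet_zero (n : ℕ) : (BSet 0 0 n).card = if n = 0 then 1 else 0 := by
  split
  case isTrue h =>
    subst h
    rw [show BSet 0 0 0 = {0} from ?_]
    · rfl
    · unfold BSet
      rw [Pms_zero]
      apply Finset.filter_true_of_mem
      intro M hM
      rw [Finset.mem_singleton] at hM
      subst hM
      constructor
      · intro x hx; simp at hx
      · simp
  case isFalse h =>
    rw [Finset.card_eq_zero]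
    ext M
    simp only [BSet, Finset.mem_filter, mem_Pms, Finset.notMem_empty, iff_false]
    rintro ⟨⟨h1, h2⟩, h3, h4⟩
    rcases Multiset.empty_or_exists_mem M with rfl | ⟨x, hx⟩
    · simp at h2; omega
    · have := h1 x hx
      have := h3 x hx
      omega

lemma HSet_eq_Pms {b n : ℕ} (h : n ≤ b) : HSet b n = Pms n := by
  unfold HSet
  rw [Finset.filter_true_of_mem]
  intro M hM
  rw [mem_Pms] at hM
  intro x hx
  have h1 : x + (Multiset.card (M.erase x)) ≤ M.sum := by
    have : M = x ::ₘ M.erase x := (Multiset.cons_erase hx).symm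
    conv_rhs => rw [this]
    rw [Multiset.sum_cons]
    have := card_le_sum_of_pos (M := M.erase x) (fun y hy => hM.1 y (Multiset.mem_of_mem_erase hy))
    omega
  have h2 : Multiset.card (M.erase x) + 1 = Multiset.card M := by
    rw [← Multiset.card_cons, Multiset.cons_erase hx]
  rw [hM.2] at h1
  omega

def ESet (a l m : ℕ) : Finset (Multiset ℕ) :=
  (Pms m).filter (fun M => (∀ x ∈ M, x ≤ a) ∧ Multiset.card M = l)

lemma card_BSet_split (a l n : ℕ) :
    (BSet a (l+1) n).card = (BSet a l n).card + (ESet a (l+1) n).card := by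
  have e1 : (BSet a (l+1) n).filter (fun M => Multiset.card M ≤ l) = BSet a l n := by
    ext M
    simp only [BSet, Finset.mem_filter, Finset.mem_filter]
    constructor
    · rintro ⟨⟨h1, h2, h3⟩, h4⟩; exact ⟨h1, h2, h4⟩
    · rintro ⟨h1, h2, h3⟩; exact ⟨⟨h1, h2, by omega⟩, h3⟩
  have e2 : (BSet a (l+1) n).filter (fun M => ¬ Multiset.card M ≤ l) = ESet a (l+1) n := by
    ext M
    simp only [BSet, ESet, Finset.mem_filter]
    constructor
    · rintro ⟨⟨h1, h2, h3⟩, h4⟩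
      simp only [not_le] at h4
      exact ⟨h1, h2, by omega⟩
    · rintro ⟨h1, h2, h3⟩
      refine ⟨⟨h1, h2, by omega⟩, by simp; omega⟩
  rw [← Finset.card_filter_add_card_filter_not
    (s := BSet a (l+1) n) (p := fun M => Multiset.card M ≤ l), e1, e2]

lemma card_BSet_zero_len (a n : ℕ) : (BSet a 0 n).card = (ESet a 0 n).card := by
  have e : BSet a 0 n = ESet a 0 n := by
    ext M
    simp only [BSet, ESet, Finset.mem_filter]
    constructor
    · rintro ⟨h1, h2, h3⟩; exact ⟨h1, h2, by omega⟩
    · rintro ⟨h1, h2, h3⟩; exact ⟨h1, h2, by omega⟩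
  rw [e]

lemma card_HSet_fiber (b n : ℕ) :
    (HSet b n).card = ∑ a ∈ Finset.range (b+2), (ESet a (b+1-a) n).card := by
  rw [← Finset.sum_range_reflect]
  rw [Finset.card_eq_sum_card_fiberwise
    (f := Multiset.card) (t := Finset.range (b+2)) ?_]
  · apply Finset.sum_congr rfl
    intro c hc
    rw [Finset.mem_range] at hc
    have e : (HSet b n).filter (fun M => Multiset.card M = c)
        = ESet (b + 2 - 1 - c) (b + 1 - (b + 2 - 1 - c)) n := by
      have hs1 : b + 2 - 1 - c = b + 1 - c := by omega
      have hs2 : b + 1 - (b + 1 - c) = c := by omega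
      rw [hs1, hs2]
      ext M
      simp only [HSet, ESet, Finset.mem_filter, mem_Pms]
      constructor
      · rintro ⟨⟨⟨h1, h2⟩, h3⟩, h4⟩
        refine ⟨⟨h1, h2⟩, fun x hx => ?_, h4⟩
        have := h3 x hx
        omega
      · rintro ⟨⟨h1, h2⟩, h3, h4⟩
        refine ⟨⟨⟨h1, h2⟩, fun x hx => ?_⟩, h4⟩
        have := h3 x hx
        omega
    rw [e]
  · intro M hM
    simp only [HSet, Finset.mem_coe, Finset.mem_filter, mem_Pms] at hM
    rw [Finset.mem_coe, Finset.mem_range]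
    rcases Multiset.empty_or_exists_mem M with rfl | ⟨x, hx⟩
    · simp
    · have := hM.2 x hx
      have := hM.1.1 x hx
      omega
lemma sumBSet_succ (b n : ℕ) :
    ∑ a ∈ Finset.range (b+2), (BSet a (b+1-a) n).card
      = (∑ a ∈ Finset.range (b+1), (BSet a (b-a) n).card) + (HSet b n).card := by
  rw [Finset.sum_range_succ, card_HSet_fiber, Finset.sum_range_succ (n := b+1)]
  have h1 : ∀ a ∈ Finset.range (b+1),
      (BSet a (b+1-a) n).card = (BSet a (b-a) n).card + (ESet a (b+1-a) n).card := by
    intro a ha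
    rw [Finset.mem_range] at ha
    have : b + 1 - a = (b - a) + 1 := by omega
    rw [this, card_BSet_split, ← this]
  rw [Finset.sum_congr rfl h1, Finset.sum_add_distrib]
  have : b + 1 - (b+1) = 0 := by omega
  rw [this, card_BSet_zero_len]
  ring

lemma map_succ_pred (K : Multiset ℕ) :
    (K.map (fun x => x + 1)).map (fun x => x - 1) = K := by
  rw [Multiset.map_map]
  simp

def hkA (b : ℕ) (M : Multiset ℕ) : ℕ := b + 1 - Multiset.card M

def hkD (b : ℕ) (M : Multiset ℕ) : Multiset ℕ :=
  ((M.erase (b + 2 - Multiset.card M)).filter (fun x => 1 < x)).map (fun x => x - 1)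

def hkJ (b : ℕ) (p : ℕ × Multiset ℕ) : Multiset ℕ :=
  (p.1 + 1) ::ₘ (p.2.map (fun x => x + 1) +
    Multiset.replicate (b - p.1 - Multiset.card p.2) 1)

def Sg (b m : ℕ) : Finset (ℕ × Multiset ℕ) :=
  (Finset.range (b+1) ×ˢ Pms m).filter
    (fun p => (∀ x ∈ p.2, x ≤ p.1) ∧ Multiset.card p.2 ≤ b - p.1)

lemma D_spec {b n : ℕ} {M : Multiset ℕ} (hM : M ∈ HSet (b+1) n \ HSet b n) :
    (∀ x ∈ M, 0 < x) ∧ M.sum = n ∧ (b + 2 - Multiset.card M) ∈ M ∧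
      1 ≤ Multiset.card M ∧ Multiset.card M ≤ b + 1 ∧
      (∀ x ∈ M, x ≤ b + 2 - Multiset.card M) := by
  obtain ⟨h1, h2⟩ := Finset.mem_sdiff.1 hM
  simp only [HSet, Finset.mem_filter, mem_Pms] at h1 h2
  obtain ⟨⟨hpos, hsum⟩, hle⟩ := h1
  push_neg at h2
  obtain ⟨x, hx, hxgt⟩ := h2 ⟨hpos, hsum⟩
  have hxle := hle x hx
  have hxpos := hpos x hx
  have hc : Multiset.card M ≤ b + 1 := by omega
  have hc1 : 1 ≤ Multiset.card M := by
    rw [Nat.one_le_iff_ne_zero, Ne, Multiset.card_eq_zero]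
    rintro rfl; simp at hx
  have hxv : x = b + 2 - Multiset.card M := by omega
  refine ⟨hpos, hsum, hxv ▸ hx, hc1, hc, fun y hy => ?_⟩
  have := hle y hy
  omega

lemma hk_forward {b n : ℕ} (h : b + 1 ≤ n) {M : Multiset ℕ}
    (hM : M ∈ HSet (b+1) n \ HSet b n) :
    (hkA b M, hkD b M) ∈ Sg b (n - (b+1)) := by
  obtain ⟨hpos, hsum, hv, hc1, hc, hmax⟩ := D_spec hM
  set c := Multiset.card M with hcdef
  set v := b + 2 - c with hvdef
  set E := M.erase v with hEdef
  have hEpos : ∀ x ∈ E, 0 < x := fun x hx => hpos x (Multiset.mem_of_mem_erase hx)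
  have hEmax : ∀ x ∈ E, x ≤ v := fun x hx => hmax x (Multiset.mem_of_mem_erase hx)
  have hEcard : Multiset.card E + 1 = c := by
    rw [← Multiset.card_cons, Multiset.cons_erase hv]
  have hEsum : v + E.sum = n := by
    rw [← Multiset.sum_cons, Multiset.cons_erase hv, hsum]
  set F := E.filter (fun x => 1 < x) with hFdef
  have hsplit : F + Multiset.replicate (E.count 1) 1 = E := by
    rw [← filter_not_one hEpos]
    exact Multiset.filter_add_not _ _
  have hFsum : F.sum + E.count 1 = E.sum := by
    conv_rhs => rw [← hsplit]
    rw [Multiset.sum_add, Multiset.sum_replicate]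
    simp
  have hFcard : Multiset.card F + E.count 1 = Multiset.card E := by
    conv_rhs => rw [← hsplit]
    rw [Multiset.card_add, Multiset.card_replicate]
  have hFpos : ∀ x ∈ F, 0 < x := by
    intro x hx
    have := Multiset.of_mem_filter hx
    omega
  have hDsum : (hkD b M).sum + Multiset.card F = F.sum := by
    unfold hkD
    rw [← hcdef, ← hvdef, ← hEdef, ← hFdef]
    exact sum_map_pred hFpos
  have hDcard : Multiset.card (hkD b M) = Multiset.card F := by
    unfold hkD
    rw [← hcdef, ← hvdef, ← hEdef, ← hFdef, Multiset.card_map]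
  have hvpos : 0 < v := hpos v hv
  simp only [Sg, Finset.mem_filter, Finset.mem_product, Finset.mem_range, mem_Pms]
  refine ⟨⟨?_, ?_, ?_⟩, ?_, ?_⟩
  · unfold hkA; omega
  · intro x hx
    unfold hkD at hx
    rw [← hcdef, ← hvdef, ← hEdef, ← hFdef] at hx
    obtain ⟨y, hy, rfl⟩ := Multiset.mem_map.1 hx
    have := Multiset.of_mem_filter hy
    omega
  · omega
  · intro x hx
    unfold hkD at hx
    rw [← hcdef, ← hvdef, ← hEdef, ← hFdef] at hx
    obtain ⟨y, hy, rfl⟩ := Multiset.mem_map.1 hx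
    have h1 := hEmax y (Multiset.mem_of_mem_filter hy)
    unfold hkA
    omega
  · unfold hkA
    omega

lemma Sg_spec {b m : ℕ} {p : ℕ × Multiset ℕ} (hp : p ∈ Sg b m) :
    p.1 ≤ b ∧ (∀ x ∈ p.2, 0 < x) ∧ p.2.sum = m ∧ (∀ x ∈ p.2, x ≤ p.1) ∧
      Multiset.card p.2 ≤ b - p.1 := by
  simp only [Sg, Finset.mem_filter, Finset.mem_product, Finset.mem_range, mem_Pms] at hp
  exact ⟨by omega, hp.1.2.1, hp.1.2.2, hp.2.1, hp.2.2⟩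

lemma hkJ_card {b : ℕ} (p : ℕ × Multiset ℕ) (hcard : Multiset.card p.2 ≤ b - p.1) :
    Multiset.card (hkJ b p) = b - p.1 + 1 := by
  unfold hkJ
  rw [Multiset.card_cons, Multiset.card_add, Multiset.card_map, Multiset.card_replicate]
  omega

lemma hkJ_sum {b m : ℕ} (p : ℕ × Multiset ℕ) (hp1 : p.1 ≤ b)
    (hsum : p.2.sum = m) (hcard : Multiset.card p.2 ≤ b - p.1) :
    (hkJ b p).sum = m + b + 1 := by
  unfold hkJ
  rw [Multiset.sum_cons, Multiset.sum_add, Multiset.sum_replicate, sum_map_succ]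
  simp only [smul_eq_mul, mul_one]
  omega

lemma hk_backward {b n : ℕ} (h : b + 1 ≤ n) {p : ℕ × Multiset ℕ}
    (hp : p ∈ Sg b (n - (b+1))) :
    hkJ b p ∈ HSet (b+1) n \ HSet b n := by
  obtain ⟨hp1, hpos, hsum, hle, hcard⟩ := Sg_spec hp
  have hc := hkJ_card p hcard
  have hs : (hkJ b p).sum = n := by
    rw [hkJ_sum p hp1 hsum hcard]
    omega
  have hmem : ∀ x ∈ hkJ b p, 0 < x ∧ x ≤ p.1 + 1 := by
    intro x hx
    unfold hkJ at hx
    rcases Multiset.mem_cons.1 hx with rfl | hx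
    · omega
    · rcases Multiset.mem_add.1 hx with hx | hx
      · obtain ⟨y, hy, rfl⟩ := Multiset.mem_map.1 hx
        have := hle y hy
        omega
      · rw [Multiset.eq_of_mem_replicate hx]
        omega
  rw [Finset.mem_sdiff]
  constructor
  · simp only [HSet, Finset.mem_filter, mem_Pms]
    refine ⟨⟨fun x hx => (hmem x hx).1, hs⟩, fun x hx => ?_⟩
    have := (hmem x hx).2
    omega
  · simp only [HSet, Finset.mem_filter, mem_Pms, not_and]
    intro _
    push_neg
    refine ⟨p.1 + 1, ?_, ?_⟩
    · unfold hkJ; exact Multiset.mem_cons_self _ _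
    · omega

lemma hk_left_inv {b n : ℕ} (h : b + 1 ≤ n) {M : Multiset ℕ}
    (hM : M ∈ HSet (b+1) n \ HSet b n) :
    hkJ b (hkA b M, hkD b M) = M := by
  obtain ⟨hpos, hsum, hv, hc1, hc, hmax⟩ := D_spec hM
  set c := Multiset.card M with hcdef
  set v := b + 2 - c with hvdef
  set E := M.erase v with hEdef
  have hEpos : ∀ x ∈ E, 0 < x := fun x hx => hpos x (Multiset.mem_of_mem_erase hx)
  have hEcard : Multiset.card E + 1 = c := by
    rw [← Multiset.card_cons, Multiset.cons_erase hv]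
  set F := E.filter (fun x => 1 < x) with hFdef
  have hsplit : F + Multiset.replicate (E.count 1) 1 = E := by
    rw [← filter_not_one hEpos]
    exact Multiset.filter_add_not _ _
  have hFcard : Multiset.card F + E.count 1 = Multiset.card E := by
    conv_rhs => rw [← hsplit]
    rw [Multiset.card_add, Multiset.card_replicate]
  have hFpos : ∀ x ∈ F, 0 < x := by
    intro x hx
    have := Multiset.of_mem_filter hx
    omega
  have hD : hkD b M = F.map (fun x => x - 1) := by
    unfold hkD
    rw [← hcdef, ← hvdef, ← hEdef, ← hFdef]
  unfold hkJ
  simp only [hD, Multiset.card_map]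
  have h1 : hkA b M + 1 = v := by unfold hkA; omega
  have h2 : (F.map (fun x => x - 1)).map (fun x => x + 1) = F := map_pred_succ hFpos
  have h3 : b - hkA b M - Multiset.card F = E.count 1 := by
    unfold hkA
    omega
  rw [h1, h2, h3, hsplit, Multiset.cons_erase hv]

lemma hk_right_inv {b n : ℕ} (h : b + 1 ≤ n) {p : ℕ × Multiset ℕ}
    (hp : p ∈ Sg b (n - (b+1))) :
    (hkA b (hkJ b p), hkD b (hkJ b p)) = p := by
  obtain ⟨hp1, hpos, hsum, hle, hcard⟩ := Sg_spec hp
  have hc := hkJ_card p hcard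
  have hA : hkA b (hkJ b p) = p.1 := by
    unfold hkA
    omega
  have hD : hkD b (hkJ b p) = p.2 := by
    unfold hkD
    have hv : b + 2 - Multiset.card (hkJ b p) = p.1 + 1 := by omega
    rw [hv]
    have herase : (hkJ b p).erase (p.1 + 1)
        = p.2.map (fun x => x + 1) + Multiset.replicate (b - p.1 - Multiset.card p.2) 1 := by
      unfold hkJ
      exact Multiset.erase_cons_head _ _
    rw [herase, Multiset.filter_add]
    have hf1 : (p.2.map (fun x => x + 1)).filter (fun x => 1 < x) = p.2.map (fun x => x + 1) := by
      rw [Multiset.filter_eq_self]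
      intro x hx
      obtain ⟨y, hy, rfl⟩ := Multiset.mem_map.1 hx
      have := hpos y hy
      omega
    have hf2 : (Multiset.replicate (b - p.1 - Multiset.card p.2) 1).filter (fun x => (1:ℕ) < x) = 0 := by
      rw [Multiset.filter_eq_nil]
      intro x hx
      rw [Multiset.eq_of_mem_replicate hx]
      omega
    rw [hf1, hf2, add_zero, map_succ_pred]
  rw [hA, hD]

lemma HSet_mono {b n : ℕ} : HSet b n ⊆ HSet (b+1) n := by
  intro M hM
  simp only [HSet, Finset.mem_filter] at hM ⊢
  refine ⟨hM.1, fun x hx => ?_⟩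
  have := hM.2 x hx
  omega

lemma card_Sg (b m : ℕ) :
    (Sg b m).card = ∑ a ∈ Finset.range (b+1), (BSet a (b-a) m).card := by
  rw [Finset.card_eq_sum_card_fiberwise (f := Prod.fst) (t := Finset.range (b+1)) ?_]
  · apply Finset.sum_congr rfl
    intro a ha
    have e : (Sg b m).filter (fun p => p.1 = a)
        = (BSet a (b-a) m).image (fun K => (a, K)) := by
      ext p
      simp only [Sg, BSet, Finset.mem_filter, Finset.mem_product, Finset.mem_range,
        Finset.mem_image, mem_Pms]
      constructor
      · rintro ⟨⟨⟨hr, hm⟩, hcond⟩, rfl⟩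
        exact ⟨p.2, ⟨hm, hcond⟩, rfl⟩
      · rintro ⟨K, ⟨hm, hcond⟩, rfl⟩
        exact ⟨⟨⟨Finset.mem_range.1 ha, hm⟩, hcond⟩, rfl⟩
    rw [e, Finset.card_image_of_injective]
    intro x y hxy
    simpa using hxy
  · intro p hp
    simp only [Sg, Finset.mem_coe, Finset.mem_filter, Finset.mem_product] at hp
    exact hp.1.1

lemma card_HSet_succ {b n : ℕ} (h : b + 1 ≤ n) :
    (HSet (b+1) n).card
      = (HSet b n).card + ∑ a ∈ Finset.range (b+1), (BSet a (b-a) (n-(b+1))).card := by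
  rw [← Finset.card_sdiff_add_card_eq_card (HSet_mono (b := b) (n := n)), add_comm]
  congr 1
  rw [← card_Sg]
  apply Finset.card_bij' (i := fun M _ => (hkA b M, hkD b M)) (j := fun p _ => hkJ b p)
  · intro M hM
    exact hk_forward h hM
  · intro p hp
    exact hk_backward h hp
  · intro M hM
    exact hk_left_inv h hM
  · intro p hp
    exact hk_right_inv h hp

lemma main_ind (b : ℕ) : ∀ n, (TS b n).card = (HSet b n).card ∧
    (US b n).card = ∑ a ∈ Finset.range (b+1), (BSet a (b-a) n).card := by
  induction b with
  | zero =>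
    intro n
    constructor
    · show (if n = 0 then ({[]} : Finset (List ℕ)) else ∅).card = _
      rw [card_HSet_zero]
      split <;> simp
    · show (if n = 0 then ({[]} : Finset (List ℕ)) else ∅).card = _
      rw [Finset.sum_range_one, card_BSet_zero]
      split <;> simp
  | succ b ih =>
    intro n
    constructor
    · rw [card_TS_succ, (ih n).1]
      split
      case isTrue h =>
        rw [(ih (n - (b+1))).2, card_HSet_succ h]
      case isFalse h =>
        rw [HSet_eq_Pms (by omega : n ≤ b), HSet_eq_Pms (by omega : n ≤ b + 1), add_zero]
    · rw [card_US_succ, (ih n).2, (ih n).1]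
      have := sumBSet_succ b n
      rw [show b + 1 + 1 = b + 2 from rfl, this]


end SchmidtAux

/-- Schmidt's problem: the number of strictly decreasing sequences of positive integers
whose odd-indexed parts sum to `n` equals the number of partitions of `n`. -/
theorem schmidt_problem (n : ℕ) (hn : 1 ≤ n) :
    Nat.card {l : List ℕ // IsStrict l ∧ schmidtSum 2 l = n} =
      Fintype.card (Nat.Partition n) := by
  rw [natCard_eq, (main_ind n n).1, HSet_eq_Pms (le_refl n), card_Pms]
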